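/- arXiv:2306.04967 — 2 statements merged into one kernel-verified Lean document; each statement's English description precedes it below -/
import Mathlib

section
/- Let (L|K,v) be a finite extension of valued fields such that the residue field extension Lv|Kv is separable of degree [Lv : Kv] = [L : K]. Then there exists x ∈ L with vx = 0 such that Lv = Kv(xv) and O_L = O_K[x], and moreover Ω_{O_L|O_K} = 0. -/
open scoped TensorProduct

set_option maxHeartbeats 1000000
set_option synthInstance.maxHeartbeats 400000

noncomputable section

namespace VP

universe u

variable {Γ : Type*} [LinearOrderedCommGroupWithZero Γ]

/-! ### Ordered abelian group notions (multiplicative, inside `Γˣ`) -/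

/-- `H` is a convex subgroup of the ordered abelian group `S`. -/
def ConvexIn (S H : Subgroup Γˣ) : Prop :=
  H ≤ S ∧ ∀ a ∈ H, ∀ b ∈ S, 1 ≤ b → b ≤ a → b ∈ H

/-- the element `γ : Γ` is (the coercion of) a member of `H`. -/
def MemVal (H : Subgroup Γˣ) (γ : Γ) : Prop := ∃ u ∈ H, (u : Γ) = γ

/-- The smallest convex subgroup of `S` containing (the element of `S` with value) `γ`. -/
def smallestConvexIn (S : Subgroup Γˣ) (γ : Γ) : Subgroup Γˣ :=
  sInf {H | ConvexIn S H ∧ MemVal H γ}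

/-- The largest convex subgroup of `S` not containing `γ`. -/
def largestConvexAvoiding (S : Subgroup Γˣ) (γ : Γ) : Subgroup Γˣ :=
  sSup {H | ConvexIn S H ∧ ¬ MemVal H γ}

/-- The archimedean component of `S` at `γ`, i.e. the quotient of the smallest convex
subgroup containing `γ` by the largest convex subgroup avoiding `γ`, is a discretely
ordered group, i.e. has a smallest element `> 1`. -/
def ArchComponentDiscrete (S : Subgroup Γˣ) (γ : Γ) : Prop :=
  ∃ a ∈ smallestConvexIn S γ, 1 < a ∧ a ∉ largestConvexAvoiding S γ ∧
    ∀ b ∈ smallestConvexIn S γ, 1 < b → b ∉ largestConvexAvoiding S γ →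
      ∃ h ∈ largestConvexAvoiding S γ, a ≤ b * h

/-! ### Value groups, valuation rings, residue fields -/

/-- The value group of a valuation on a field, as a subgroup of `Γˣ`. -/
def valueGroup {L : Type*} [Field L] (v : Valuation L Γ) : Subgroup Γˣ :=
  MonoidHom.range (Units.map (v.toMonoidWithZeroHom.toMonoidHom))

section homs

variable {A B C : Type*} [Field A] [Field B] [Field C]

/-- The inclusion of valuation rings induced by a field embedding. -/
def extHom (f : A →+* B) (v : Valuation B Γ) :
    (v.comap f).valuationSubring →+* v.valuationSubring where
  toFun x := ⟨f x.1, x.2⟩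
  map_one' := Subtype.ext (map_one f)
  map_mul' x y := Subtype.ext (map_mul f x.1 y.1)
  map_zero' := Subtype.ext (map_zero f)
  map_add' x y := Subtype.ext (map_add f x.1 y.1)

/-- The inclusion of valuation rings in an intermediate stage of a tower. -/
def towerHom (g : A →+* B) (h : B →+* C) (f : A →+* C) (hf : h.comp g = f)
    (v : Valuation C Γ) :
    (v.comap f).valuationSubring →+* (v.comap h).valuationSubring where
  toFun x := ⟨g x.1, by subst hf; exact x.2⟩
  map_one' := Subtype.ext (map_one g)
  map_mul' x y := Subtype.ext (map_mul g x.1 y.1)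
  map_zero' := Subtype.ext (map_zero g)
  map_add' x y := Subtype.ext (map_add g x.1 y.1)

theorem one_of_mul_eq_one {x y : Γ} (hx : x ≤ 1) (hy : y ≤ 1) (hxy : x * y = 1) :
    x = 1 := by
  rcases lt_or_eq_of_le hx with hx' | hx'
  · exfalso
    have : x * y < 1 := by
      calc x * y ≤ x * 1 := by
            exact mul_le_mul_right hy x
        _ = x := mul_one x
        _ < 1 := hx'
    rw [hxy] at this
    exact lt_irrefl _ this
  · exact hx'

/-- A ring homomorphism between valuation rings which is compatible with the valuations
is a local homomorphism. -/
theorem isLocalHom_of_map_val {u : Valuation A Γ} {w : Valuation B Γ}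
    (φ : u.valuationSubring →+* w.valuationSubring)
    (hφ : ∀ x : u.valuationSubring, w (φ x : B) = u (x : A)) :
    IsLocalHom φ := by
  constructor
  intro a ha
  rcases ha with ⟨uu, huu⟩
  have hprod : ((uu : w.valuationSubring) : B) * (((uu⁻¹ : _) : w.valuationSubring) : B) = 1 := by
    norm_cast
    rw [mul_inv_cancel]
    rfl
  have h1 : w ((φ a : B)) = 1 := by
    apply one_of_mul_eq_one (x := w ((φ a : B))) (y := w (((uu⁻¹ : _) : w.valuationSubring) : B))
    · exact (φ a).2
    · exact ((uu⁻¹ : _) : w.valuationSubring).2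
    · rw [← map_mul]
      rw [huu] at hprod
      rw [hprod, map_one]
  have hu1 : u (a : A) = 1 := by rw [← hφ a, h1]
  have hane : (a : A) ≠ 0 := by
    intro h0
    rw [h0, map_zero] at hu1
    exact zero_ne_one hu1
  have hinv : ((a : A)⁻¹) ∈ u.valuationSubring := by
    rw [Valuation.mem_valuationSubring_iff, map_inv₀, hu1, inv_one]
  refine IsUnit.of_mul_eq_one (a := a) ⟨(a : A)⁻¹, hinv⟩ ?_
  exact Subtype.ext (mul_inv_cancel₀ hane)

theorem extHom_val (f : A →+* B) (v : Valuation B Γ) (x : (v.comap f).valuationSubring) :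
    v ((extHom f v x : B)) = (v.comap f) (x : A) := rfl

theorem towerHom_val (g : A →+* B) (h : B →+* C) (f : A →+* C) (hf : h.comp g = f)
    (v : Valuation C Γ) (x : (v.comap f).valuationSubring) :
    (v.comap h) ((towerHom g h f hf v x : B)) = (v.comap f) (x : A) := by
  subst hf
  rfl

instance extHom_isLocalHom (f : A →+* B) (v : Valuation B Γ) : IsLocalHom (extHom f v) :=
  isLocalHom_of_map_val (extHom f v) (extHom_val f v)

instance towerHom_isLocalHom (g : A →+* B) (h : B →+* C) (f : A →+* C) (hf : h.comp g = f)
    (v : Valuation C Γ) : IsLocalHom (towerHom g h f hf v) :=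
  isLocalHom_of_map_val (towerHom g h f hf v) (towerHom_val g h f hf v)

/-- The algebra structure on the valuation ring of `v` over the valuation ring of the
restriction of `v`. -/
def extAlgebra (f : A →+* B) (v : Valuation B Γ) :
    Algebra (v.comap f).valuationSubring v.valuationSubring :=
  (extHom f v).toAlgebra

/-- The algebra structure between valuation rings of restrictions in a tower. -/
def towerAlgebra (g : A →+* B) (h : B →+* C) (f : A →+* C) (hf : h.comp g = f)
    (v : Valuation C Γ) :
    Algebra (v.comap f).valuationSubring (v.comap h).valuationSubring :=
  (towerHom g h f hf v).toAlgebra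

/-- The induced map between residue fields. -/
def extResMap (f : A →+* B) (v : Valuation B Γ) :
    IsLocalRing.ResidueField (v.comap f).valuationSubring →+*
      IsLocalRing.ResidueField v.valuationSubring :=
  IsLocalRing.ResidueField.map (extHom f v)

/-- The residue field of the extension as an algebra over the residue field of the base. -/
def extResAlgebra (f : A →+* B) (v : Valuation B Γ) :
    Algebra (IsLocalRing.ResidueField (v.comap f).valuationSubring)
      (IsLocalRing.ResidueField v.valuationSubring) :=
  (extResMap f v).toAlgebra

/-- The induced map between residue fields in a tower. -/
def towerResMap (g : A →+* B) (h : B →+* C) (f : A →+* C) (hf : h.comp g = f)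
    (v : Valuation C Γ) :
    IsLocalRing.ResidueField (v.comap f).valuationSubring →+*
      IsLocalRing.ResidueField (v.comap h).valuationSubring :=
  IsLocalRing.ResidueField.map (towerHom g h f hf v)

def towerResAlgebra (g : A →+* B) (h : B →+* C) (f : A →+* C) (hf : h.comp g = f)
    (v : Valuation C Γ) :
    Algebra (IsLocalRing.ResidueField (v.comap f).valuationSubring)
      (IsLocalRing.ResidueField (v.comap h).valuationSubring) :=
  (towerResMap g h f hf v).toAlgebra

end homs

section ext

variable (K : Type*) {L : Type*} [Field K] [Field L] [Algebra K L]

/-- The extension of valued fields `(L|K,v)` is unibranched: the restriction of `v` to `K`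
has a unique extension to `L` up to equivalence (phrased via valuation subrings of `L`
lying over the valuation subring of the restriction of `v` to `K`). -/
def IsUnibranched (v : Valuation L Γ) : Prop :=
  ∀ O : ValuationSubring L,
    (∀ x : K, algebraMap K L x ∈ O ↔ v (algebraMap K L x) ≤ 1) → O = v.valuationSubring

/-- The ramification index `e(L|K,v) = (vL : vK)`. -/
def ramificationIndex (v : Valuation L Γ) : ℕ :=
  (valueGroup (v.comap (algebraMap K L))).relIndex (valueGroup v)

/-- The residue degree `f(L|K,v) = [Lv : Kv]`. -/
def residueDegree (v : Valuation L Γ) : ℕ :=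
  letI := extResAlgebra (algebraMap K L) v
  Module.finrank (IsLocalRing.ResidueField (v.comap (algebraMap K L)).valuationSubring)
    (IsLocalRing.ResidueField v.valuationSubring)

/-- `(L|K,v)` is defectless: `[L:K] = e(L|K,v) ⬝ f(L|K,v)`. -/
def IsDefectless (v : Valuation L Γ) : Prop :=
  Module.finrank K L = ramificationIndex K v * residueDegree K v

/-- The subring `𝒪_K[x]` of `L` generated by the valuation ring of `v|_K` and `x : L`. -/
def adjoinRing (v : Valuation L Γ) (x : L) : Subring L :=
  Subring.closure
    ((((v.comap (algebraMap K L)).valuationSubring.toSubring.map (algebraMap K L)) : Set L) ∪ {x})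

/-- `vL = vK + ℤ ⬝ vx`; i.e. the value of `x` generates the value group extension. -/
def GeneratesValueGroup (v : Valuation L Γ) (x : L) : Prop :=
  ∀ y : L, y ≠ 0 → ∃ (c : K) (n : ℤ), c ≠ 0 ∧ v y = v (algebraMap K L c) * (v x) ^ n

/-- `θ` is an Artin-Schreier generator of `L|K` (for degree `p`):
`L = K(θ)` and `θ^p - θ ∈ K`. -/
def IsASGenerator (p : ℕ) (θ : L) : Prop :=
  IntermediateField.adjoin K {θ} = ⊤ ∧ θ ^ p - θ ∈ (algebraMap K L).range

/-- `η` is a Kummer generator of `L|K` (of degree `q`): `L = K(η)` and `η^q ∈ K`. -/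
def IsKummerGenerator (q : ℕ) (η : L) : Prop :=
  IntermediateField.adjoin K {η} = ⊤ ∧ η ^ q ∈ (algebraMap K L).range

/-- `σ` belongs to the inertia group of `(L|K,v)`: it lies in the decomposition group
(`v ∘ σ` is equivalent to `v`) and `v (σ x - x) > 0` (additively) for all `x ∈ 𝒪_L`. -/
def InInertia (v : Valuation L Γ) (σ : L ≃ₐ[K] L) : Prop :=
  (v.comap σ.toAlgHom.toRingHom).IsEquiv v ∧ ∀ x : L, v x ≤ 1 → v (σ x - x) < 1

/-- The inertia field of `(L|K,v)`: the fixed field of the inertia group. -/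
def inertiaField (v : Valuation L Γ) : IntermediateField K L where
  carrier := {x | ∀ σ : L ≃ₐ[K] L, InInertia K v σ → σ x = x}
  mul_mem' := fun {a b} ha hb σ hσ => by rw [map_mul, ha σ hσ, hb σ hσ]
  one_mem' := fun σ _ => map_one σ
  add_mem' := fun {a b} ha hb σ hσ => by rw [map_add, ha σ hσ, hb σ hσ]
  zero_mem' := fun σ _ => map_zero σ
  algebraMap_mem' := fun r σ _ => σ.commutes r
  inv_mem' := fun x hx σ hσ => by rw [map_inv₀, hx σ hσ]

end ext


section extinst

variable {A B : Type*} [Field A] [Field B] [Algebra A B]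

/-- The valuation ring of `v` is an algebra over the valuation ring of its restriction. -/
instance extAlgebraI (v : Valuation B Γ) :
    Algebra (v.comap (algebraMap A B)).valuationSubring v.valuationSubring :=
  extAlgebra (algebraMap A B) v

/-- The residue field of `v` is an algebra over the residue field of its restriction. -/
instance extResAlgebraI (v : Valuation B Γ) :
    Algebra (IsLocalRing.ResidueField (v.comap (algebraMap A B)).valuationSubring)
      (IsLocalRing.ResidueField v.valuationSubring) :=
  extResAlgebra (algebraMap A B) v

end extinst

section inter

variable {K L : Type*} [Field K] [Field L] [Algebra K L] (v : Valuation L Γ)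

instance interBaseAlgebra (E : IntermediateField K L) :
    Algebra (v.comap (algebraMap K L)).valuationSubring
      (v.comap (algebraMap E L)).valuationSubring :=
  towerAlgebra (algebraMap K E) (algebraMap E L) (algebraMap K L)
    (IsScalarTower.algebraMap_eq K E L).symm v

instance interBaseResAlgebra (E : IntermediateField K L) :
    Algebra (IsLocalRing.ResidueField (v.comap (algebraMap K L)).valuationSubring)
      (IsLocalRing.ResidueField (v.comap (algebraMap E L)).valuationSubring) :=
  towerResAlgebra (algebraMap K E) (algebraMap E L) (algebraMap K L)
    (IsScalarTower.algebraMap_eq K E L).symm v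

/-- The algebra structure between the valuation rings of restrictions of `v` along a
step `E ≤ E'` of intermediate fields. -/
def stepAlgebra {E E' : IntermediateField K L} (h : E ≤ E') :
    Algebra (v.comap (algebraMap E L)).valuationSubring
      (v.comap (algebraMap E' L)).valuationSubring :=
  towerAlgebra (IntermediateField.inclusion h).toRingHom (algebraMap E' L) (algebraMap E L)
    (RingHom.ext fun _ => rfl) v

/-- The corresponding algebra structure between residue fields. -/
def stepResAlgebra {E E' : IntermediateField K L} (h : E ≤ E') :
    Algebra (IsLocalRing.ResidueField (v.comap (algebraMap E L)).valuationSubring)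
      (IsLocalRing.ResidueField (v.comap (algebraMap E' L)).valuationSubring) :=
  towerResAlgebra (IntermediateField.inclusion h).toRingHom (algebraMap E' L) (algebraMap E L)
    (RingHom.ext fun _ => rfl) v

def stepScalarTower {E E' : IntermediateField K L} (h : E ≤ E') :
    letI := stepAlgebra v h
    IsScalarTower (v.comap (algebraMap K L)).valuationSubring
      (v.comap (algebraMap E L)).valuationSubring
      (v.comap (algebraMap E' L)).valuationSubring := by
  letI := stepAlgebra v h
  refine IsScalarTower.of_algebraMap_eq fun x => ?_
  rfl

end inter

section tower3

variable {K L M : Type*} [Field K] [Field L] [Field M] [Algebra K L] [Algebra L M]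
  [Algebra K M] [IsScalarTower K L M] (v : Valuation M Γ)

instance midAlgebra :
    Algebra (v.comap (algebraMap K M)).valuationSubring
      (v.comap (algebraMap L M)).valuationSubring :=
  towerAlgebra (algebraMap K L) (algebraMap L M) (algebraMap K M)
    (IsScalarTower.algebraMap_eq K L M).symm v

instance rings3ScalarTower :
    IsScalarTower (v.comap (algebraMap K M)).valuationSubring
      (v.comap (algebraMap L M)).valuationSubring v.valuationSubring :=
  IsScalarTower.of_algebraMap_eq fun x =>
    Subtype.ext (IsScalarTower.algebraMap_apply K L M (x : K))

end tower3

/-- `(K,v)` is henselian: every algebraic field extension of `K` admits a unique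
extension of `v` up to equivalence (phrased via valuation subrings lying over the
valuation ring of `v`). -/
def IsHenselianValued {K : Type u} [Field K] (v : Valuation K Γ) : Prop :=
  ∀ (L : Type u) [Field L] [Algebra K L], Algebra.IsAlgebraic K L →
    ∃! O : ValuationSubring L, ∀ x : K, algebraMap K L x ∈ O ↔ v x ≤ 1


/-- `B|A` is a tower of finite Galois extensions. -/
def IsGaloisTower (A B : Type*) [Field A] [Field B] [Algebra A B] : Prop :=
  ∃ (n : ℕ) (ch : Fin (n + 1) → IntermediateField A B),
    ch 0 = ⊥ ∧ ch (Fin.last n) = ⊤ ∧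
    ∀ i : Fin n, ∃ h : ch i.castSucc ≤ ch i.succ,
      letI : Algebra (ch i.castSucc) (ch i.succ) :=
        (IntermediateField.inclusion h).toRingHom.toAlgebra
      letI : Module (ch i.castSucc) (ch i.succ) := Algebra.toModule
      IsGalois (ch i.castSucc) (ch i.succ) ∧ FiniteDimensional (ch i.castSucc) (ch i.succ)

section dr

variable {K : Type*} [Field K]

/-- Condition (DRvg): for convex subgroups `Γ₁ ⊊ Γ₂` of the value group `vK`, the
quotient `Γ₂/Γ₁` is not isomorphic to `ℤ`. -/
def DRvg (v : Valuation K Γ) : Prop :=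
  ∀ H₁ H₂ : Subgroup Γˣ, ConvexIn (valueGroup v) H₁ → ConvexIn (valueGroup v) H₂ →
    H₁ < H₂ → IsEmpty ((↥H₂ ⧸ H₁.subgroupOf H₂) ≃* Multiplicative ℤ)

/-- Condition (DRvr): if the residue characteristic is `p > 0`, then the `p`-power map on
`𝒪_{K̂}/p𝒪_{K̂}` is surjective, where `𝒪_{K̂}` is the valuation ring of the completion. -/
def DRvr (v : Valuation K Γ) : Prop :=
  ∀ p : ℕ, p.Prime → CharP (IsLocalRing.ResidueField v.valuationSubring) p →
    letI : Valued K Γ := Valued.mk' v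
    Function.Surjective
      (fun x : (Valued.extensionValuation (K := K) (Γ₀ := Γ)).integer ⧸
          (Ideal.span {(p : (Valued.extensionValuation (K := K) (Γ₀ := Γ)).integer)}) => x ^ p)

/-- `(K,v)` is a deeply ramified field: conditions (DRvg) and (DRvr) hold. -/
def IsDeeplyRamified (v : Valuation K Γ) : Prop := DRvg v ∧ DRvr v

/-- `(K,v)` is nontrivially valued. -/
def IsNontriviallyValued (v : Valuation K Γ) : Prop := ∃ x : K, x ≠ 0 ∧ v x ≠ 1

end dr

end VP
open VP IsLocalRing

universe u v

section Stmt9Aux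

variable {Γ₀ : Type*} [LinearOrderedCommGroupWithZero Γ₀]

theorem aux_isUnit_iff_val {F : Type*} [Field F] (w : Valuation F Γ₀)
    (z : w.valuationSubring) : IsUnit z ↔ w (z : F) = 1 := by
  constructor
  · rintro ⟨u, rfl⟩
    have hprod : ((u : w.valuationSubring) : F) * (((u⁻¹ : _) : w.valuationSubring) : F) = 1 := by
      norm_cast
      rw [mul_inv_cancel]
      rfl
    exact one_of_mul_eq_one (u : w.valuationSubring).2 ((u⁻¹ : _) : w.valuationSubring).2
      (by rw [← map_mul, hprod, map_one])
  · intro h1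
    have hne : (z : F) ≠ 0 := by
      intro h0
      rw [h0, map_zero] at h1
      exact zero_ne_one h1
    have hinv : ((z : F)⁻¹) ∈ w.valuationSubring := by
      rw [Valuation.mem_valuationSubring_iff, map_inv₀, h1, inv_one]
    exact IsUnit.of_mul_eq_one (a := z) ⟨(z : F)⁻¹, hinv⟩ (Subtype.ext (mul_inv_cancel₀ hne))

theorem aux_val_eq_one_of_residue_ne_zero {F : Type*} [Field F] (w : Valuation F Γ₀)
    (z : w.valuationSubring) (hz : IsLocalRing.residue _ z ≠ 0) : w (z : F) = 1 := by
  rw [← aux_isUnit_iff_val]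
  by_contra h
  exact hz (Ideal.Quotient.eq_zero_iff_mem.mpr ((IsLocalRing.mem_maximalIdeal z).mpr h))

theorem aux_val_lt_one_of_residue_eq_zero {F : Type*} [Field F] (w : Valuation F Γ₀)
    (z : w.valuationSubring) (hz : IsLocalRing.residue _ z = 0) : w (z : F) < 1 := by
  rcases lt_or_eq_of_le z.2 with h | h
  · exact h
  · exfalso
    have hu : IsUnit z := (aux_isUnit_iff_val w z).mpr h
    have : IsUnit (IsLocalRing.residue _ z) := hu.map _
    rw [hz] at this
    exact this.ne_zero rfl

theorem aux_residue_eq_zero_of_val_lt_one {F : Type*} [Field F] (w : Valuation F Γ₀)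
    (z : w.valuationSubring) (hz : w (z : F) < 1) : IsLocalRing.residue _ z = 0 := by
  by_contra h
  exact absurd (aux_val_eq_one_of_residue_ne_zero w z h) hz.ne

theorem aux_coe_sum {K L : Type*} [Field K] [Field L] [Algebra K L]
    (v : Valuation L Γ₀) (x : v.valuationSubring) {n : ℕ}
    (e : Fin n → (v.comap (algebraMap K L)).valuationSubring) :
    ((∑ i : Fin n, algebraMap _ _ (e i) * x ^ (i : ℕ) : v.valuationSubring) : L)
      = ∑ i : Fin n, algebraMap K L ((e i : K)) * (x : L) ^ (i : ℕ) := by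
  rw [show ((∑ i : Fin n, algebraMap _ _ (e i) * x ^ (i : ℕ) : v.valuationSubring) : L)
      = ∑ i : Fin n, ((algebraMap _ _ (e i) * x ^ (i : ℕ) : v.valuationSubring) : L) from
    map_sum (SubringClass.subtype v.valuationSubring) _ _]
  refine Finset.sum_congr rfl fun i _ => ?_
  push_cast
  rfl

theorem aux_res_aeval {K L : Type*} [Field K] [Field L] [Algebra K L]
    (v : Valuation L Γ₀) (x : v.valuationSubring)
    (G : Polynomial (v.comap (algebraMap K L)).valuationSubring) :
    IsLocalRing.residue _ (Polynomial.aeval x G)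
      = Polynomial.aeval (IsLocalRing.residue _ x)
          (G.map (IsLocalRing.residue (v.comap (algebraMap K L)).valuationSubring)) := by
  rw [Polynomial.aeval_def, Polynomial.hom_eval₂, Polynomial.aeval_def, Polynomial.eval₂_map]
  congr 1

theorem aux_key {K L : Type*} [Field K] [Field L] [Algebra K L]
    (v : Valuation L Γ₀) {n : ℕ} (x : v.valuationSubring)
    (hli : LinearIndependent (ResidueField (v.comap (algebraMap K L)).valuationSubring)
      (fun i : Fin n => (IsLocalRing.residue _ x) ^ (i : ℕ)))
    (c : Fin n → K) (j : Fin n) :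
    v (algebraMap K L (c j)) ≤ v (∑ i, algebraMap K L (c i) * (x : L) ^ (i : ℕ)) := by
  classical
  by_cases hc : ∀ i, c i = 0
  · simp [hc]
  push_neg at hc
  obtain ⟨i0, hi0⟩ := hc
  obtain ⟨m, -, hm⟩ := Finset.exists_max_image Finset.univ
    (fun i => v (algebraMap K L (c i))) ⟨i0, Finset.mem_univ i0⟩
  have hvm0 : v (algebraMap K L (c m)) ≠ 0 := by
    intro h0
    have h1 := hm i0 (Finset.mem_univ i0)
    rw [h0, le_zero_iff] at h1
    exact hi0 ((map_eq_zero (algebraMap K L)).mp ((Valuation.zero_iff v).mp h1))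
  have hcm : c m ≠ 0 := fun h => hvm0 (by simp [h])
  have hdmem : ∀ i, (v.comap (algebraMap K L)) (c i / c m) ≤ 1 := by
    intro i
    show v (algebraMap K L (c i / c m)) ≤ 1
    rw [map_div₀, map_div₀]
    exact (div_le_one₀ (zero_lt_iff.mpr hvm0)).mpr (hm i (Finset.mem_univ i))
  set d : Fin n → (v.comap (algebraMap K L)).valuationSubring :=
    fun i => ⟨c i / c m, hdmem i⟩ with hdd
  set s : v.valuationSubring := ∑ i, algebraMap _ _ (d i) * x ^ (i : ℕ) with hs
  have hress : IsLocalRing.residue _ s ≠ 0 := by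
    intro h0
    have hexp : IsLocalRing.residue _ s
        = ∑ i, (IsLocalRing.residue _ (d i)) • (IsLocalRing.residue _ x) ^ (i : ℕ) := by
      rw [hs, map_sum]
      refine Finset.sum_congr rfl fun i _ => ?_
      rw [map_mul, map_pow, Algebra.smul_def]
      congr 1
    rw [hexp] at h0
    have hzm := Fintype.linearIndependent_iff.mp hli
      (fun i => IsLocalRing.residue _ (d i)) h0 m
    have hdm : d m = 1 := Subtype.ext (by simp [hdd, div_self hcm])
    rw [hdm, map_one] at hzm
    exact one_ne_zero hzm
  have hvs : v (s : L) = 1 := aux_val_eq_one_of_residue_ne_zero v s hress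
  have hcoes : (s : L) = ∑ i, algebraMap K L (c i / c m) * (x : L) ^ (i : ℕ) := by
    rw [hs]
    exact aux_coe_sum v x d
  have htot : (∑ i, algebraMap K L (c i) * (x : L) ^ (i : ℕ))
      = algebraMap K L (c m) * (s : L) := by
    rw [hcoes, Finset.mul_sum]
    refine Finset.sum_congr rfl fun i _ => ?_
    rw [← mul_assoc, ← map_mul, mul_div_cancel₀ _ hcm]
  rw [htot, map_mul, hvs, mul_one]
  exact hm j (Finset.mem_univ j)

end Stmt9Aux

/-- a finite extension of valued fields whose residue field extension is
separable of degree `[Lv : Kv] = [L : K]` satisfies `𝒪_L = 𝒪_K[x]` for some `x` with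
`vx = 0` and `Lv = Kv(xv)`, and `Ω_{𝒪_L|𝒪_K} = 0`. -/
theorem statement_9 {K L : Type u} [Field K] [Field L] [Algebra K L]
    {Γ : Type v} [LinearOrderedCommGroupWithZero Γ] (v : Valuation L Γ)
    [FiniteDimensional K L]
    (hsep : Algebra.IsSeparable
      (ResidueField (v.comap (algebraMap K L)).valuationSubring)
      (ResidueField v.valuationSubring))
    (hdeg : residueDegree K v = Module.finrank K L) :
    ∃ x : v.valuationSubring, v (x : L) = 1 ∧
      Algebra.adjoin (ResidueField (v.comap (algebraMap K L)).valuationSubring)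
        {IsLocalRing.residue _ x} = ⊤ ∧
      v.valuationSubring.toSubring = adjoinRing K v (x : L) ∧
      Subsingleton (KaehlerDifferential
        (v.comap (algebraMap K L)).valuationSubring v.valuationSubring) := by
  classical
  have hn : 0 < Module.finrank K L := Module.finrank_pos
  set n := Module.finrank K L with hndef
  have hfr : Module.finrank
      (ResidueField (v.comap (algebraMap K L)).valuationSubring)
      (ResidueField v.valuationSubring) = n := hdeg
  haveI : FiniteDimensional (ResidueField (v.comap (algebraMap K L)).valuationSubring)
      (ResidueField v.valuationSubring) :=
    Module.finite_of_finrank_pos (by rw [hfr]; exact hn)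
  obtain ⟨ξ₀, hξ₀⟩ := Field.exists_primitive_element
    (ResidueField (v.comap (algebraMap K L)).valuationSubring)
    (ResidueField v.valuationSubring)
  obtain ⟨ξ, hξtop, hξne⟩ :
      ∃ ξ : ResidueField v.valuationSubring,
        IntermediateField.adjoin
          (ResidueField (v.comap (algebraMap K L)).valuationSubring) {ξ} = ⊤ ∧ ξ ≠ 0 := by
    by_cases h0 : ξ₀ = 0
    · refine ⟨1, ?_, one_ne_zero⟩
      rw [h0] at hξ₀
      rw [← hξ₀, IntermediateField.adjoin_zero, IntermediateField.adjoin_one]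
    · exact ⟨ξ₀, hξ₀, h0⟩
  have hint : IsIntegral
      (ResidueField (v.comap (algebraMap K L)).valuationSubring) ξ :=
    IsIntegral.of_finite _ _
  have halg : Algebra.adjoin
      (ResidueField (v.comap (algebraMap K L)).valuationSubring) {ξ} = ⊤ := by
    have h1 := IntermediateField.adjoin_simple_toSubalgebra_of_isAlgebraic hint.isAlgebraic
    rw [hξtop, IntermediateField.top_toSubalgebra] at h1
    exact h1.symm
  have hmindeg : (minpoly
      (ResidueField (v.comap (algebraMap K L)).valuationSubring) ξ).natDegree = n := by
    have h2 := IntermediateField.adjoin.finrank hint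
    rw [hξtop, IntermediateField.finrank_top'] at h2
    rw [← h2]
    exact hfr
  have hli : LinearIndependent
      (ResidueField (v.comap (algebraMap K L)).valuationSubring)
      (fun i : Fin n => ξ ^ (i : ℕ)) := by
    have h3 := linearIndependent_pow
      (K := ResidueField (v.comap (algebraMap K L)).valuationSubring) ξ
    rwa [hmindeg] at h3
  obtain ⟨x, hres⟩ := IsLocalRing.residue_surjective (R := v.valuationSubring) ξ
  have hvx : v (x : L) = 1 :=
    aux_val_eq_one_of_residue_ne_zero v x (by rw [hres]; exact hξne)
  have hlix : LinearIndependent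
      (ResidueField (v.comap (algebraMap K L)).valuationSubring)
      (fun i : Fin n => (IsLocalRing.residue _ x) ^ (i : ℕ)) := by
    simpa only [hres] using hli
  have key : ∀ (c : Fin n → K) (j : Fin n),
      v (algebraMap K L (c j)) ≤ v (∑ i, algebraMap K L (c i) * (x : L) ^ (i : ℕ)) :=
    fun c j => aux_key v x hlix c j
  have hliK : LinearIndependent K (fun i : Fin n => (x : L) ^ (i : ℕ)) := by
    rw [Fintype.linearIndependent_iff]
    intro g hg j
    have h4 := key g j
    rw [show (∑ i, algebraMap K L (g i) * (x : L) ^ (i : ℕ))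
        = ∑ i, g i • (x : L) ^ (i : ℕ) from
      Finset.sum_congr rfl fun i _ => (Algebra.smul_def _ _).symm, hg, map_zero,
      le_zero_iff] at h4
    exact (map_eq_zero (algebraMap K L)).mp ((Valuation.zero_iff v).mp h4)
  haveI : Nonempty (Fin n) := ⟨⟨0, hn⟩⟩
  set B : Module.Basis (Fin n) K L := basisOfLinearIndependentOfCardEqFinrank hliK (by simpa using hndef)
    with hBdef
  have hB : ∀ i, B i = (x : L) ^ (i : ℕ) := fun i => by
    rw [hBdef, coe_basisOfLinearIndependentOfCardEqFinrank]
  have crep : ∀ y : L, ∃ c : Fin n → K,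
      y = ∑ i, algebraMap K L (c i) * (x : L) ^ (i : ℕ) ∧
      ∀ i, v (algebraMap K L (c i)) ≤ v y := by
    intro y
    have hsum : (∑ i, algebraMap K L (B.repr y i) * (x : L) ^ (i : ℕ)) = y := by
      conv_rhs => rw [← B.sum_repr y]
      exact Finset.sum_congr rfl fun i _ => by rw [hB, Algebra.smul_def]
    refine ⟨fun i => B.repr y i, hsum.symm, fun i => ?_⟩
    have h5 := key (fun i => B.repr y i) i
    rwa [hsum] at h5
  have hadj : Algebra.adjoin (v.comap (algebraMap K L)).valuationSubring
      ({x} : Set v.valuationSubring) = ⊤ := by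
    rw [eq_top_iff]
    rintro y -
    obtain ⟨c, hc1, hc2⟩ := crep (y : L)
    have hcmem : ∀ i, (v.comap (algebraMap K L)) (c i) ≤ 1 :=
      fun i => le_trans (hc2 i) y.2
    have hy : y = ∑ i, (⟨c i, hcmem i⟩ : (v.comap (algebraMap K L)).valuationSubring)
        • x ^ (i : ℕ) := by
      apply Subtype.ext
      rw [show (∑ i, (⟨c i, hcmem i⟩ : (v.comap (algebraMap K L)).valuationSubring)
            • x ^ (i : ℕ)) = ∑ i, algebraMap _ _
            ((⟨c i, hcmem i⟩ : (v.comap (algebraMap K L)).valuationSubring)) * x ^ (i : ℕ) from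
        Finset.sum_congr rfl fun i _ => Algebra.smul_def _ _]
      rw [aux_coe_sum v x (fun i => ⟨c i, hcmem i⟩)]
      exact hc1
    rw [hy]
    have hxmem : x ∈ Algebra.adjoin (v.comap (algebraMap K L)).valuationSubring
        ({x} : Set v.valuationSubring) := Algebra.subset_adjoin rfl
    refine Subalgebra.sum_mem (Algebra.adjoin (v.comap (algebraMap K L)).valuationSubring {x})
      (fun i _ => Subalgebra.smul_mem _ ?_ _)
    exact Subalgebra.pow_mem _ hxmem _
  refine ⟨x, hvx, ?_, ?_, ?_⟩
  · rw [hres]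
    exact halg
  · -- O_L = O_K[x]
    ext z
    constructor
    · intro hz
      have hz' : v z ≤ 1 := hz
      obtain ⟨c, hc1, hc2⟩ := crep z
      rw [hc1]
      refine Subring.sum_mem _ fun i _ => Subring.mul_mem _ ?_ (Subring.pow_mem _ ?_ _)
      · refine Subring.subset_closure (Or.inl ?_)
        exact Subring.mem_map.mpr ⟨c i, le_trans (hc2 i) hz', rfl⟩
      · exact Subring.subset_closure (Or.inr rfl)
    · intro hz
      have hsub : adjoinRing K v (x : L) ≤ v.valuationSubring.toSubring := by
        apply Subring.closure_le.mpr
        rintro w hw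
        rcases hw with hw | hw
        · obtain ⟨c, hc, rfl⟩ := Subring.mem_map.mp hw
          exact hc
        · rw [Set.mem_singleton_iff] at hw
          rw [hw]
          exact x.2
      exact hsub hz
  · -- Kähler differentials vanish
    set μ := minpoly (ResidueField (v.comap (algebraMap K L)).valuationSubring) ξ with hμ
    have hμmonic : μ.Monic := minpoly.monic hint
    have hμlifts : μ ∈ Polynomial.lifts
        (IsLocalRing.residue (v.comap (algebraMap K L)).valuationSubring) := by
      rw [Polynomial.lifts_iff_coeff_lifts]
      intro m
      exact IsLocalRing.residue_surjective _
    obtain ⟨G, hGmap, hGdeg, hGmonic⟩ :=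
      Polynomial.lifts_and_natDegree_eq_and_monic hμlifts hμmonic
    set g : v.valuationSubring := Polynomial.aeval x G with hg
    have hresg : IsLocalRing.residue _ g = 0 := by
      rw [hg, aux_res_aeval v x G, hGmap, hres]
      exact minpoly.aeval _ ξ
    have hvg : v (g : L) < 1 := aux_val_lt_one_of_residue_eq_zero v g hresg
    obtain ⟨c, hc1, hc2⟩ := crep (g : L)
    have hcmem : ∀ i, (v.comap (algebraMap K L)) (c i) ≤ 1 :=
      fun i => le_trans (hc2 i) (le_of_lt hvg)
    set e : Fin n → (v.comap (algebraMap K L)).valuationSubring :=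
      fun i => ⟨c i, hcmem i⟩ with he
    have hrese : ∀ i, IsLocalRing.residue _ (e i) = 0 := by
      intro i
      refine aux_residue_eq_zero_of_val_lt_one (v.comap (algebraMap K L)) (e i) ?_
      exact lt_of_le_of_lt (hc2 i) hvg
    set Q : Polynomial (v.comap (algebraMap K L)).valuationSubring :=
      ∑ i : Fin n, Polynomial.C (e i) * Polynomial.X ^ (i : ℕ) with hQ
    have hQeval : (Polynomial.aeval x Q : v.valuationSubring) = g := by
      apply Subtype.ext
      rw [hQ, map_sum]
      rw [Finset.sum_congr rfl fun (i : Fin n) _ => show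
          (Polynomial.aeval x) (Polynomial.C (e i) * Polynomial.X ^ (i : ℕ))
            = algebraMap _ _ (e i) * x ^ (i : ℕ) by
        rw [map_mul, Polynomial.aeval_C, map_pow, Polynomial.aeval_X]]
      rw [aux_coe_sum v x e]
      exact hc1.symm
    set P := G - Q with hP
    have hPx : Polynomial.aeval x P = 0 := by
      rw [hP, map_sub, hQeval, hg, sub_self]
    have hmapP : P.map (IsLocalRing.residue _) = μ := by
      rw [hP, Polynomial.map_sub, hGmap]
      have hQ0 : Q.map (IsLocalRing.residue
          (v.comap (algebraMap K L)).valuationSubring) = 0 := by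
        rw [hQ, Polynomial.map_sum]
        refine Finset.sum_eq_zero fun i _ => ?_
        rw [Polynomial.map_mul, Polynomial.map_C, hrese i, Polynomial.map_pow,
          Polynomial.map_X, Polynomial.C_0, zero_mul]
      rw [hQ0, sub_zero]
    have hresu : IsLocalRing.residue _
        (Polynomial.aeval x (Polynomial.derivative P)) ≠ 0 := by
      rw [aux_res_aeval v x _, ← Polynomial.derivative_map, hmapP, hres]
      exact (Algebra.IsSeparable.isSeparable _ ξ).aeval_derivative_ne_zero
        (minpoly.aeval _ ξ)
    have hu : IsUnit (Polynomial.aeval x (Polynomial.derivative P) : v.valuationSubring) := by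
      by_contra hnu
      exact hresu (Ideal.Quotient.eq_zero_iff_mem.mpr ((IsLocalRing.mem_maximalIdeal _).mpr hnu))
    have hDx : (KaehlerDifferential.D (v.comap (algebraMap K L)).valuationSubring
        v.valuationSubring) x = 0 := by
      have h0 := (KaehlerDifferential.D (v.comap (algebraMap K L)).valuationSubring
        v.valuationSubring).map_aeval P x
      rw [hPx, map_zero] at h0
      obtain ⟨u, hu'⟩ := hu
      rw [← hu'] at h0
      have h1 : u • (KaehlerDifferential.D (v.comap (algebraMap K L)).valuationSubring
          v.valuationSubring) x = 0 := by
        rw [Units.smul_def]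
        exact h0.symm
      have h2 := congrArg (fun m => u⁻¹ • m) h1
      simp only [inv_smul_smul, smul_zero] at h2
      exact h2
    have hD0 : ∀ z : v.valuationSubring,
        (KaehlerDifferential.D (v.comap (algebraMap K L)).valuationSubring
          v.valuationSubring) z = 0 := by
      intro z
      have hz : z ∈ Algebra.adjoin (v.comap (algebraMap K L)).valuationSubring
          ({x} : Set v.valuationSubring) := by
        rw [hadj]
        trivial
      have h6 := Derivation.eqOn_adjoin
        (D1 := KaehlerDifferential.D (v.comap (algebraMap K L)).valuationSubring
          v.valuationSubring) (D2 := 0)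
        (fun w hw => by rw [Set.mem_singleton_iff] at hw; subst hw; simpa using hDx) hz
      simpa using h6
    have hall : ∀ m : KaehlerDifferential
        (v.comap (algebraMap K L)).valuationSubring v.valuationSubring, m = 0 := by
      intro m
      have hm : m ∈ Submodule.span v.valuationSubring
          (Set.range (KaehlerDifferential.D
            (v.comap (algebraMap K L)).valuationSubring v.valuationSubring)) := by
        rw [KaehlerDifferential.span_range_derivation]
        trivial
      have hle : Submodule.span v.valuationSubring
          (Set.range (KaehlerDifferential.D
            (v.comap (algebraMap K L)).valuationSubring v.valuationSubring)) ≤ ⊥ :=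
        Submodule.span_le.mpr (by rintro w ⟨z, rfl⟩; simp [hD0 z])
      simpa using hle hm
    exact ⟨fun a b => by rw [hall a, hall b]⟩
end
end

section
/- Let (L|K,v) be a Kummer extension of valued fields of prime degree q with Kummer generator η, and let ζ_q ∈ K be a primitive q-th root of unity. If (L|K,v) is unibranched, then for all c ∈ K one has v(η − c) ≤ v(η·(1 − ζ_q)). -/
open scoped TensorProduct

set_option maxHeartbeats 1000000
set_option synthInstance.maxHeartbeats 400000

noncomputable section

open VP IsLocalRing

universe u v

/-- in a unibranched Kummer extension of prime degree `q` with Kummer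
generator `η` and `ζ_q ∈ K` a primitive `q`-th root of unity, for all `c ∈ K` one has
`v(η - c) ≤ v(η(1 - ζ_q))` (additively; multiplicatively the displayed inequality). -/
theorem statement_16 {K L : Type u} [Field K] [Field L] [Algebra K L]
    {Γ : Type v} [LinearOrderedCommGroupWithZero Γ] (v : Valuation L Γ)
    (q : ℕ) (hq : q.Prime) [IsGalois K L] (hdeg : Module.finrank K L = q)
    (hchar : ringChar K ≠ q) (ζ : K) (hζ : IsPrimitiveRoot ζ q)
    (η : L) (hη : IsKummerGenerator K q η)
    (huni : IsUnibranched K v) :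
    ∀ c : K, v (η * algebraMap K L (1 - ζ)) ≤ v (η - algebraMap K L c) := by
  intro c
  classical
  obtain ⟨hadj, a, ha⟩ := hη
  have hq1 : 1 < q := hq.one_lt
  have hfd : FiniteDimensional K L :=
    Module.finite_of_finrank_pos (by rw [hdeg]; exact hq.pos)
  -- η ≠ 0
  have hη0 : η ≠ 0 := by
    intro h0
    have hsub : ({η} : Set L) ⊆ (⊥ : IntermediateField K L) := by
      rw [h0]; intro x hx; simp_all
    have h1 : Module.finrank K (IntermediateField.adjoin K ({η} : Set L)) = 1 :=
      IntermediateField.finrank_adjoin_eq_one_iff.mpr hsub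
    rw [hadj, IntermediateField.finrank_top', hdeg] at h1
    omega
  set ζL : L := algebraMap K L ζ with hζLdef
  have hζL : IsPrimitiveRoot ζL q := hζ.map_of_injective (algebraMap K L).injective
  haveI : NeZero q := ⟨hq.ne_zero⟩
  -- a nontrivial automorphism
  obtain ⟨σ, hσ1⟩ := Fintype.exists_ne_of_one_lt_card
    (by rw [← Nat.card_eq_fintype_card, IsGalois.card_aut_eq_finrank, hdeg]; exact hq1) (1 : L ≃ₐ[K] L)
  have hσpow : (σ η) ^ q = η ^ q := by
    rw [← map_pow, ← ha, AlgEquiv.commutes]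
  have hu : (σ η * η⁻¹) ^ q = 1 := by
    rw [mul_pow, inv_pow, hσpow, mul_inv_cancel₀ (pow_ne_zero _ hη0)]
  obtain ⟨i, hilt, hi⟩ := hζL.eq_pow_of_pow_eq_one hu
  have hση : σ η = ζL ^ i * η := by
    rw [hi, inv_mul_cancel_right₀ hη0]
  have hi0 : i ≠ 0 := by
    intro h0
    apply hσ1
    have hfix : σ η = η := by rw [hση, h0, pow_zero, one_mul]
    have hfixall : ∀ x : L, x ∈ IntermediateField.adjoin K ({η} : Set L) → σ x = x := by
      intro x hx
      induction hx using IntermediateField.adjoin_induction with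
      | mem y hy => rw [Set.mem_singleton_iff] at hy; rw [hy]; exact hfix
      | algebraMap y => exact σ.commutes y
      | add y z _ _ hy hz => rw [map_add, hy, hz]
      | inv y _ hy => rw [map_inv₀, hy]
      | mul y z _ _ hy hz => rw [map_mul, hy, hz]
    refine AlgEquiv.ext fun x => ?_
    rw [AlgEquiv.one_apply]
    exact hfixall x (by rw [hadj]; exact IntermediateField.mem_top)
  have hcop : q.Coprime i := (Nat.Prime.coprime_iff_not_dvd hq).mpr
    (fun hdvd => by have := Nat.le_of_dvd (Nat.pos_of_ne_zero hi0) hdvd; omega)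
  obtain ⟨k, -, hk⟩ := Nat.exists_mul_mod_eq_one_of_coprime hcop.symm hq1
  -- σ^n η = ζL^(i*n) * η
  have hpow : ∀ n : ℕ, (σ ^ n) η = ζL ^ (i * n) * η := by
    intro n
    induction n with
    | zero => simp
    | succ n ih =>
      have hc : σ ζL = ζL := σ.commutes ζ
      rw [pow_succ', AlgEquiv.mul_apply, ih, map_mul, map_pow, hc, hση, ← mul_assoc,
        ← pow_add, show i * n + i = i * (n + 1) by ring]
  have hτη : (σ ^ k) η = ζL * η := by
    rw [hpow k]
    have hik : i * k = q * (i * k / q) + 1 := by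
      conv_lhs => rw [← Nat.div_add_mod (i * k) q, hk]
    rw [hik, pow_add, pow_mul, hζL.pow_eq_one, one_pow, pow_one, one_mul]
  -- the comap valuation is equivalent to v
  set f : L →+* L := ((σ ^ k : L ≃ₐ[K] L) : L →+* L) with hfdef
  have hfav : ∀ x : L, f x = (σ ^ k) x := fun x => rfl
  have hO : (v.comap f).valuationSubring = v.valuationSubring := by
    apply huni
    intro x
    rw [Valuation.mem_valuationSubring_iff, Valuation.comap_apply, hfav,
      AlgEquiv.commutes]
  have hle1 : ∀ {x : L}, (v.comap f) x ≤ 1 ↔ v x ≤ 1 := by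
    intro x
    rw [← Valuation.mem_valuationSubring_iff, ← Valuation.mem_valuationSubring_iff, hO]
  have hEquiv : (v.comap f).IsEquiv v := Valuation.isEquiv_of_val_le_one (fun x => hle1)
  have hEq : ∀ x y : L, v ((σ ^ k) x) ≤ v ((σ ^ k) y) ↔ v x ≤ v y := fun x y => hEquiv x y
  have hLt : ∀ x y : L, v ((σ ^ k) x) < v ((σ ^ k) y) ↔ v x < v y := by
    intro x y
    simp only [lt_iff_le_not_ge, hEq]
  -- τ^q = 1
  have hτq : (σ ^ k) ^ q = 1 := by
    have h : (σ ^ k) ^ Fintype.card (L ≃ₐ[K] L) = 1 := pow_card_eq_one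
    rwa [← Nat.card_eq_fintype_card, IsGalois.card_aut_eq_finrank, hdeg] at h
  -- v is invariant under σ^k
  have hInv : ∀ x : L, v ((σ ^ k) x) = v x := by
    intro x
    set τ : L ≃ₐ[K] L := σ ^ k with hτdef
    have happ : ∀ n : ℕ, (τ ^ (n + 1)) x = τ ((τ ^ n) x) := by
      intro n; rw [pow_succ', AlgEquiv.mul_apply]
    have keyq : ∀ n : ℕ, v ((τ ^ q) x) = v x := by
      intro n; rw [hτq]; rfl
    rcases lt_trichotomy (v (τ x)) (v x) with hlt | heq | hgt
    · exfalso
      have hchain : ∀ n : ℕ, v ((τ ^ (n + 1)) x) < v ((τ ^ n) x) := by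
        intro n
        induction n with
        | zero => simpa using hlt
        | succ n ih =>
          have h2 := (hLt ((τ ^ (n + 1)) x) ((τ ^ n) x)).mpr ih
          rwa [← happ (n + 1), ← happ n] at h2
      have hdesc : ∀ n : ℕ, v ((τ ^ (n + 1)) x) < v x := by
        intro n
        induction n with
        | zero => simpa using hlt
        | succ n ih => exact lt_trans (hchain (n + 1)) ih
      have := hdesc (q - 1)
      rw [Nat.sub_add_cancel hq.one_le, keyq 0] at this
      exact lt_irrefl _ this
    · simpa using heq
    · exfalso
      have hchain : ∀ n : ℕ, v ((τ ^ n) x) < v ((τ ^ (n + 1)) x) := by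
        intro n
        induction n with
        | zero => simpa using hgt
        | succ n ih =>
          have h2 := (hLt ((τ ^ n) x) ((τ ^ (n + 1)) x)).mpr ih
          rwa [← happ n, ← happ (n + 1)] at h2
      have hdesc : ∀ n : ℕ, v x < v ((τ ^ (n + 1)) x) := by
        intro n
        induction n with
        | zero => simpa using hgt
        | succ n ih => exact lt_trans ih (hchain (n + 1))
      have := hdesc (q - 1)
      rw [Nat.sub_add_cancel hq.one_le, keyq 0] at this
      exact lt_irrefl _ this
  -- conclusion
  set γ : L := η - algebraMap K L c with hγdef
  have h1 : (σ ^ k) γ - γ = -(η * algebraMap K L (1 - ζ)) := by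
    have h2 : (σ ^ k) γ = ζL * η - algebraMap K L c := by
      rw [hγdef, map_sub, hτη, AlgEquiv.commutes]
    rw [h2, hγdef, map_sub, map_one, hζLdef]
    ring
  have h3 : v (η * algebraMap K L (1 - ζ)) = v ((σ ^ k) γ - γ) := by
    rw [h1, Valuation.map_neg]
  rw [h3]
  calc v ((σ ^ k) γ - γ) ≤ max (v ((σ ^ k) γ)) (v γ) := Valuation.map_sub v _ _
    _ = v γ := by rw [hInv γ, max_self]
end
end
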